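/- Let Samp : {0,1}^r × {0,1}^p → {0,1}^q be an (α,γ)-averaging sampler, let C > 0, and let f : {0,1}^q → ℝ^{w×w} be a matrix-valued function with ‖f(z)‖₁ ≤ C for every z ∈ {0,1}^q. Then Pr_{x uniform in {0,1}^r}[ ‖2^{−p} Σ_{y ∈ {0,1}^p} f(Samp(x,y)) − E_{z uniform in {0,1}^q}[f(z)]‖₁ ≥ C·α·w ] ≤ w²·γ. -/

import Mathlib

open Real Finset
open scoped Classical

noncomputable section

/-- Expectation of a real-valued function under the uniform distribution on a finite type. -/
def uniformExp {α : Type*} [Fintype α] (f : α → ℝ) : ℝ :=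
  (∑ x, f x) / (Fintype.card α)

/-- A read-once branching program of length `n`, alphabet `{0,1}^s`, width `w`. -/
structure ROBP (n s w : ℕ) where
  δ : Fin n → Fin w → (Fin s → Bool) → Fin w
  start : Fin w
  accept : Finset (Fin w)

def ROBP.run {n s w : ℕ} (P : ROBP n s w) (x : Fin n → Fin s → Bool) : Fin w :=
  Fin.foldl n (fun v i => P.δ i v (x i)) P.start

def ROBP.fn {n s w : ℕ} (P : ROBP n s w) (x : Fin n → Fin s → Bool) : ℝ :=
  if P.run x ∈ P.accept then 1 else 0

/-- The class of functions computed by ROBPs of length `n`, alphabet `{0,1}^s`, width `w`. -/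
def Bclass (n s w : ℕ) : Set ((Fin n → Fin s → Bool) → ℝ) :=
  {f | ∃ P : ROBP n s w, f = P.fn}

/-- `(G, σ)` is a `W`-bounded `ε`-WPRG for the class `F`. -/
def IsWPRG {n s : ℕ} {ι : Type} [Fintype ι]
    (F : Set ((Fin n → Fin s → Bool) → ℝ))
    (G : ι → Fin n → Fin s → Bool) (σ : ι → ℝ) (W ε : ℝ) : Prop :=
  (∀ r, |σ r| ≤ W) ∧
  ∀ f ∈ F, |uniformExp f - uniformExp (fun r => σ r * f (G r))| ≤ ε

/-- `G` is an `ε`-PRG for the class `F`. -/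
def IsPRG {n s : ℕ} {ι : Type} [Fintype ι]
    (F : Set ((Fin n → Fin s → Bool) → ℝ))
    (G : ι → Fin n → Fin s → Bool) (ε : ℝ) : Prop :=
  ∀ f ∈ F, |uniformExp f - uniformExp (fun r => f (G r))| ≤ ε

/-- `(R, σ)` is a `(log₂ card ι, K, ε)`-weighted pseudorandom reduction from `F₀` to `F₁`. -/
def IsWPR {n₀ s₀ n₁ s₁ : ℕ} {ι : Type} [Fintype ι]
    (F₀ : Set ((Fin n₀ → Fin s₀ → Bool) → ℝ))
    (F₁ : Set ((Fin n₁ → Fin s₁ → Bool) → ℝ))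
    (R : (Fin n₁ → Fin s₁ → Bool) → ι → Fin n₀ → Fin s₀ → Bool)
    (σ : ι → ℝ) (K ε : ℝ) : Prop :=
  (∀ f ∈ F₀,
      |uniformExp f - uniformExp (fun i => σ i * uniformExp (fun x => f (R x i)))| ≤ ε) ∧
  (∀ i, |σ i| ≤ K) ∧
  (∀ f ∈ F₀, ∀ i, (fun x => f (R x i)) ∈ F₁)

def ROBP.Regular {n s w : ℕ} (P : ROBP n s w) : Prop :=
  ∀ (i : Fin n) (v : Fin w),
    (Finset.univ.filter (fun ux : Fin w × (Fin s → Bool) => P.δ i ux.1 ux.2 = v)).card = 2 ^ s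

def ROBP.Permutation {n s w : ℕ} (P : ROBP n s w) : Prop :=
  ∀ (i : Fin n) (x : Fin s → Bool), Function.Bijective (fun u => P.δ i u x)

/-- Regular ROBPs of length `n`, alphabet `{0,1}^s`, width `w`. -/
def Rclass (n s w : ℕ) : Set ((Fin n → Fin s → Bool) → ℝ) :=
  {f | ∃ P : ROBP n s w, P.Regular ∧ f = P.fn}

/-- Permutation ROBPs of length `n` over `{0,1}^s`, unbounded width, a single accept node. -/
def Pclass (n s : ℕ) : Set ((Fin n → Fin s → Bool) → ℝ) :=
  {f | ∃ (w : ℕ) (P : ROBP n s w), P.Permutation ∧ P.accept.card = 1 ∧ f = P.fn}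

/-- Permutation ROBPs of length `n`, alphabet `{0,1}^s`, width `w`, arbitrary accept set. -/
def PermClass (n s w : ℕ) : Set ((Fin n → Fin s → Bool) → ℝ) :=
  {f | ∃ P : ROBP n s w, P.Permutation ∧ f = P.fn}

/-- Run `P` starting from node `v` in layer `i` (only the transitions from layer `i` on are applied). -/
def ROBP.runFrom {n s w : ℕ} (P : ROBP n s w) (i : ℕ) (v : Fin w)
    (x : Fin n → Fin s → Bool) : Fin w :=
  Fin.foldl n (fun u j => if i ≤ (j : ℕ) then P.δ j u (x j) else u) v

/-- Acceptance probability of the subprogram of `P` started at node `v` of layer `i`. -/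
def ROBP.valueAt {n s w : ℕ} (P : ROBP n s w) (i : ℕ) (v : Fin w) : ℝ :=
  uniformExp (fun x : Fin n → Fin s → Bool => if P.runFrom i v x ∈ P.accept then (1 : ℝ) else 0)

/-- The weight `W(f)` of an ROBP: the sum over all edges of the differences of acceptance values. -/
def ROBP.weight {n s w : ℕ} (P : ROBP n s w) : ℝ :=
  ∑ i : Fin n, ∑ u : Fin w, ∑ x : Fin s → Bool,
    |P.valueAt ((i : ℕ) + 1) (P.δ i u x) - P.valueAt (i : ℕ) u|

/-- `(k,ε)`-extractor. -/
def IsExtractor (N d m : ℕ)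
    (Ext : (Fin N → Bool) → (Fin d → Bool) → (Fin m → Bool)) (k ε : ℝ) : Prop :=
  ∀ p : (Fin N → Bool) → ℝ,
    (∀ x, 0 ≤ p x) → (∑ x, p x) = 1 → (∀ x, p x ≤ (2 : ℝ) ^ (-k)) →
    (1 / 2) * ∑ z : Fin m → Bool,
      |(∑ x, ∑ y : Fin d → Bool, p x * (if Ext x y = z then (1 : ℝ) else 0)) / 2 ^ d
        - 1 / 2 ^ m| ≤ ε

/-- `(α,γ)`-averaging sampler. -/
def IsAvgSampler (r p q : ℕ)
    (Samp : (Fin r → Bool) → (Fin p → Bool) → (Fin q → Bool)) (α γ : ℝ) : Prop :=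
  ∀ f : (Fin q → Bool) → ℝ, (∀ z, -1 ≤ f z ∧ f z ≤ 1) →
    (∑ x : Fin r → Bool,
        if α ≤ |(∑ y : Fin p → Bool, f (Samp x y)) / 2 ^ p - uniformExp f| then (1 : ℝ) else 0)
      / 2 ^ r ≤ γ

/-- The matrix norm `‖M‖₁ = max_i Σ_j |M i j|`. -/
def matOneNorm {w : ℕ} (M : Matrix (Fin w) (Fin w) ℝ) : ℝ :=
  ⨆ i, ∑ j, |M i j|

end
-- STATEMENT 9
theorem stmt9 (r p q w : ℕ) (hw : 0 < w)
    (Samp : (Fin r → Bool) → (Fin p → Bool) → (Fin q → Bool))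
    (α γ C : ℝ) (hC : 0 < C)
    (hSamp : IsAvgSampler r p q Samp α γ)
    (f : (Fin q → Bool) → Matrix (Fin w) (Fin w) ℝ)
    (hf : ∀ z, matOneNorm (f z) ≤ C) :
    (∑ x : Fin r → Bool,
        if C * α * w ≤ matOneNorm
            (((2 : ℝ) ^ p)⁻¹ • ∑ y : Fin p → Bool, f (Samp x y) -
              ((2 : ℝ) ^ q)⁻¹ • ∑ z : Fin q → Bool, f z)
          then (1 : ℝ) else 0) / 2 ^ r
      ≤ (w : ℝ) ^ 2 * γ := by
  classical
  haveI : Nonempty (Fin w) := ⟨⟨0, hw⟩⟩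
  set M : (Fin r → Bool) → Matrix (Fin w) (Fin w) ℝ := fun x =>
    ((2 : ℝ) ^ p)⁻¹ • ∑ y : Fin p → Bool, f (Samp x y) -
      ((2 : ℝ) ^ q)⁻¹ • ∑ z : Fin q → Bool, f z with hMdef
  -- per-entry sampler bound
  have key : ∀ i j : Fin w,
      (∑ x : Fin r → Bool, if α ≤ |M x i j / C| then (1 : ℝ) else 0) / 2 ^ r ≤ γ := by
    intro i j
    have hb : ∀ z, -1 ≤ f z i j / C ∧ f z i j / C ≤ 1 := by
      intro z
      have h3 : |f z i j| ≤ ∑ j', |f z i j'| :=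
        Finset.single_le_sum (f := fun j' => |f z i j'|)
          (fun _ _ => abs_nonneg _) (Finset.mem_univ j)
      have h2 : ∑ j', |f z i j'| ≤ matOneNorm (f z) :=
        le_ciSup (f := fun i => ∑ j', |f z i j'|) (Set.Finite.bddAbove (Set.finite_range _)) i
      have h1 : |f z i j| ≤ C := le_trans h3 (le_trans h2 (hf z))
      have : |f z i j / C| ≤ 1 := by
        rw [abs_div, abs_of_pos hC, div_le_one hC]; exact h1
      rw [abs_le] at this
      exact this
    have hs := hSamp (fun z => f z i j / C) hb
    have heq : ∀ x, (∑ y : Fin p → Bool, f (Samp x y) i j / C) / 2 ^ p -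
        uniformExp (fun z => f z i j / C) = M x i j / C := by
      intro x
      simp only [hMdef, uniformExp, Matrix.sub_apply, Matrix.smul_apply,
        Matrix.sum_apply, smul_eq_mul]
      rw [show Fintype.card (Fin q → Bool) = 2 ^ q by simp [Fintype.card_fun]]
      push_cast
      rw [← Finset.sum_div, ← Finset.sum_div]
      field_simp
    calc (∑ x : Fin r → Bool, if α ≤ |M x i j / C| then (1 : ℝ) else 0) / 2 ^ r
        = (∑ x : Fin r → Bool,
            if α ≤ |(∑ y : Fin p → Bool, f (Samp x y) i j / C) / 2 ^ p -
              uniformExp (fun z => f z i j / C)| then (1 : ℝ) else 0) / 2 ^ r := by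
          congr 1; apply Finset.sum_congr rfl; intro x _; rw [heq x]
      _ ≤ γ := hs
  -- pointwise indicator bound
  have main : ∀ x : Fin r → Bool,
      (if C * α * w ≤ matOneNorm (M x) then (1 : ℝ) else 0) ≤
        ∑ i : Fin w, ∑ j : Fin w, (if α ≤ |M x i j / C| then (1 : ℝ) else 0) := by
    intro x
    by_cases hx : C * α * w ≤ matOneNorm (M x)
    · rw [if_pos hx]
      have hsup : matOneNorm (M x) ≤ ⨆ i : Fin w, ∑ j, |M x i j| := le_refl _
      obtain ⟨i, hi⟩ := Finite.exists_max (fun i : Fin w => ∑ j, |M x i j|)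
      have h1 : matOneNorm (M x) ≤ ∑ j, |M x i j| := ciSup_le hi
      have h2 : ∑ j : Fin w, C * α ≤ ∑ j, |M x i j| := by
        rw [Finset.sum_const, Finset.card_univ, Fintype.card_fin, nsmul_eq_mul]
        calc (w : ℝ) * (C * α) = C * α * w := by ring
          _ ≤ matOneNorm (M x) := hx
          _ ≤ _ := h1
      obtain ⟨j, _, hj⟩ := Finset.exists_le_of_sum_le Finset.univ_nonempty h2
      have hj' : α ≤ |M x i j / C| := by
        rw [abs_div, abs_of_pos hC, le_div_iff₀ hC]
        calc α * C = C * α := by ring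
          _ ≤ |M x i j| := hj
      calc (1 : ℝ) = if α ≤ |M x i j / C| then (1 : ℝ) else 0 := by rw [if_pos hj']
        _ ≤ ∑ j' : Fin w, (if α ≤ |M x i j' / C| then (1 : ℝ) else 0) :=
            Finset.single_le_sum
              (f := fun j' : Fin w => if α ≤ |M x i j' / C| then (1 : ℝ) else 0)
              (fun _ _ => by positivity) (Finset.mem_univ j)
        _ ≤ _ := Finset.single_le_sum
            (f := fun i : Fin w => ∑ j' : Fin w, (if α ≤ |M x i j' / C| then (1 : ℝ) else 0))
            (fun _ _ => Finset.sum_nonneg fun _ _ => by positivity) (Finset.mem_univ i)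
    · rw [if_neg hx]
      exact Finset.sum_nonneg fun _ _ => Finset.sum_nonneg fun _ _ => by positivity
  calc (∑ x : Fin r → Bool,
        if C * α * w ≤ matOneNorm (M x) then (1 : ℝ) else 0) / 2 ^ r
      ≤ (∑ x : Fin r → Bool, ∑ i : Fin w, ∑ j : Fin w,
          (if α ≤ |M x i j / C| then (1 : ℝ) else 0)) / 2 ^ r := by
        apply div_le_div_of_nonneg_right _ (by positivity)
        · exact Finset.sum_le_sum fun x _ => main x
    _ = ∑ i : Fin w, ∑ j : Fin w,
        (∑ x : Fin r → Bool, (if α ≤ |M x i j / C| then (1 : ℝ) else 0)) / 2 ^ r := by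
        rw [Finset.sum_comm]
        rw [Finset.sum_div]
        apply Finset.sum_congr rfl; intro i _
        rw [Finset.sum_comm, Finset.sum_div]
    _ ≤ ∑ i : Fin w, ∑ j : Fin w, γ := by
        apply Finset.sum_le_sum; intro i _
        exact Finset.sum_le_sum fun j _ => key i j
    _ = (w : ℝ) ^ 2 * γ := by
        simp [Finset.sum_const]; ring
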